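/- Let P be a probability measure on ℝ^p × ℝ^q with finite second moments whose covariance matrices Σ_X and Σ_Y are positive definite, and fix a point o = (x, y) ∈ ℝ^p × ℝ^q. For ε ∈ [0,1] let P_ε = (1−ε)P + ε δ_o, where δ_o is the Dirac measure at o. Then for all sufficiently small ε ≥ 0 the covariance matrices Σ_X(P_ε) and Σ_Y(P_ε) are positive definite, so Φ(P_ε) = tr(Σ_X(P_ε)^{-1} Σ_XY(P_ε) Σ_Y(P_ε)^{-1} Σ_YX(P_ε)) is well defined, and the map ε ↦ Φ(P_ε) is differentiable from the right at ε = 0 with right derivative equal to −(x−μ_X)ᵀ Σ_X^{-1} Σ_XY Σ_Y^{-1} Σ_YX Σ_X^{-1} (x−μ_X) − (y−μ_Y)ᵀ Σ_Y^{-1} Σ_YX Σ_X^{-1} Σ_XY Σ_Y^{-1} (y−μ_Y) + 2 (y−μ_Y)ᵀ Σ_Y^{-1} Σ_YX Σ_X^{-1} (x−μ_X), where all means and covariances on the right are those of P. -/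

import Mathlib

open Matrix MeasureTheory

noncomputable section

/-- Squared Frobenius norm of a real matrix: `‖M‖_F² = tr (M Mᵀ)`. -/
def frobSq {m n : Type*} [Fintype m] [Fintype n] (M : Matrix m n ℝ) : ℝ :=
  Matrix.trace (M * Mᵀ)

/-- Frobenius norm of a real matrix. -/
def frobNorm {m n : Type*} [Fintype m] [Fintype n] (M : Matrix m n ℝ) : ℝ :=
  Real.sqrt (frobSq M)

open Classical in
/-- `A^{-1/2}`: the inverse of the unique positive definite square root of a positive
definite matrix `A` (junk value `0` if `A` is not positive definite). -/
def invSqrt {n : Type*} [Fintype n] [DecidableEq n] (A : Matrix n n ℝ) : Matrix n n ℝ :=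
  if h : A.PosDef then
    ((h.posSemidef.1.eigenvectorUnitary : Matrix n n ℝ) *
      Matrix.diagonal ((↑) ∘ (Real.sqrt ·) ∘ h.posSemidef.1.eigenvalues) *
      (star h.posSemidef.1.eigenvectorUnitary : Matrix n n ℝ))⁻¹ else 0

variable {p q : ℕ}

/-- Mean vector `μ_X` of the first component under `P`. -/
def meanX (P : Measure ((Fin p → ℝ) × (Fin q → ℝ))) : Fin p → ℝ :=
  fun i => ∫ o, o.1 i ∂P

/-- Mean vector `μ_Y` of the second component under `P`. -/
def meanY (P : Measure ((Fin p → ℝ) × (Fin q → ℝ))) : Fin q → ℝ :=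
  fun j => ∫ o, o.2 j ∂P

/-- Covariance matrix `Σ_X` of the first component under `P`, defined entrywise. -/
def covX (P : Measure ((Fin p → ℝ) × (Fin q → ℝ))) : Matrix (Fin p) (Fin p) ℝ :=
  Matrix.of fun i i' => ∫ o, (o.1 i - meanX P i) * (o.1 i' - meanX P i') ∂P

/-- Covariance matrix `Σ_Y` of the second component under `P`, defined entrywise. -/
def covY (P : Measure ((Fin p → ℝ) × (Fin q → ℝ))) : Matrix (Fin q) (Fin q) ℝ :=
  Matrix.of fun j j' => ∫ o, (o.2 j - meanY P j) * (o.2 j' - meanY P j') ∂P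

/-- Cross-covariance matrix `Σ_XY` under `P`, defined entrywise. -/
def covXY (P : Measure ((Fin p → ℝ) × (Fin q → ℝ))) : Matrix (Fin p) (Fin q) ℝ :=
  Matrix.of fun i j => ∫ o, (o.1 i - meanX P i) * (o.2 j - meanY P j) ∂P

/-- The Pillai trace `Φ(P) = tr (Σ_X⁻¹ Σ_XY Σ_Y⁻¹ Σ_YX)` of `P`. -/
def pillai (P : Measure ((Fin p → ℝ) × (Fin q → ℝ))) : ℝ :=
  Matrix.trace ((covX P)⁻¹ * covXY P * (covY P)⁻¹ * (covXY P)ᵀ)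

/-- The Dirac contamination `P_ε = (1−ε) P + ε δ_o`. -/
def pert (P : Measure ((Fin p → ℝ) × (Fin q → ℝ))) (o : (Fin p → ℝ) × (Fin q → ℝ)) (ε : ℝ) :
    Measure ((Fin p → ℝ) × (Fin q → ℝ)) :=
  ENNReal.ofReal (1 - ε) • P + ENNReal.ofReal ε • Measure.dirac o

/-! ### Auxiliary machinery -/

namespace PillaiVM

/-- Entrywise derivative of a matrix-valued function at a point. -/
def MDeriv {m n : Type*} [Fintype m] [Fintype n]
    (M : ℝ → Matrix m n ℝ) (M' : Matrix m n ℝ) (t : ℝ) : Prop :=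
  ∀ i j, HasDerivAt (fun ε => M ε i j) (M' i j) t

variable {m n k : Type*} [Fintype m] [Fintype n] [Fintype k]

lemma MDeriv.mul {M : ℝ → Matrix m n ℝ} {N : ℝ → Matrix n k ℝ}
    {M' : Matrix m n ℝ} {N' : Matrix n k ℝ} {t : ℝ}
    (hM : MDeriv M M' t) (hN : MDeriv N N' t) :
    MDeriv (fun ε => M ε * N ε) (M' * N t + M t * N') t := by
  intro i j
  have h : ∀ ε, (M ε * N ε) i j = ∑ l, M ε i l * N ε l j := fun ε => Matrix.mul_apply
  simp only [h]
  have : HasDerivAt (fun ε => ∑ l, M ε i l * N ε l j)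
      (∑ l, (M' i l * N t l j + M t i l * N' l j)) t :=
    HasDerivAt.fun_sum fun l _ => (hM i l).mul (hN l j)
  convert this using 1
  simp [Matrix.mul_apply, Finset.sum_add_distrib]

lemma MDeriv.transpose {M : ℝ → Matrix m n ℝ} {M' : Matrix m n ℝ} {t : ℝ}
    (hM : MDeriv M M' t) : MDeriv (fun ε => (M ε)ᵀ) M'ᵀ t := fun i j => hM j i

lemma MDeriv.trace {M : ℝ → Matrix m m ℝ} {M' : Matrix m m ℝ} {t : ℝ}
    (hM : MDeriv M M' t) : HasDerivAt (fun ε => (M ε).trace) M'.trace t := by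
  simp only [Matrix.trace, Matrix.diag]
  exact HasDerivAt.fun_sum fun i _ => hM i i

lemma differentiableAt_det [DecidableEq m] {M : ℝ → Matrix m m ℝ} {t : ℝ}
    (h : ∀ i j, DifferentiableAt ℝ (fun ε => M ε i j) t) :
    DifferentiableAt ℝ (fun ε => (M ε).det) t := by
  simp only [Matrix.det_apply']
  exact DifferentiableAt.fun_sum fun σ _ =>
    ((DifferentiableAt.fun_finsetProd fun i _ => h (σ i) i).const_mul _)

lemma mderiv_pert_family (S V : Matrix m n ℝ) :
    MDeriv (fun ε => (1 - ε) • S + (ε * (1 - ε)) • V) (-S + V) 0 := by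
  intro i j
  simp only [Matrix.add_apply, Matrix.smul_apply, smul_eq_mul, Matrix.neg_apply]
  have h1 : HasDerivAt (fun ε : ℝ => 1 - ε) (-1) 0 := by
    simpa using (hasDerivAt_id (0:ℝ)).const_sub 1
  have h2 : HasDerivAt (fun ε : ℝ => ε * (1 - ε)) (1 * (1 - 0) + 0 * (-1)) 0 :=
    (hasDerivAt_id 0).mul h1
  have := (h1.mul_const (S i j)).add (h2.mul_const (V i j))
  exact this.congr_deriv (by ring)

lemma MDeriv.inv [DecidableEq m] {M : ℝ → Matrix m m ℝ} {M' : Matrix m m ℝ} {t : ℝ}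
    (hM : MDeriv M M' t) (hdet : (M t).det ≠ 0) :
    MDeriv (fun ε => (M ε)⁻¹) (-((M t)⁻¹ * M' * (M t)⁻¹)) t := by
  have hent : ∀ i j, DifferentiableAt ℝ (fun ε => M ε i j) t := fun i j => (hM i j).differentiableAt
  have hdetf : DifferentiableAt ℝ (fun ε => (M ε).det) t := differentiableAt_det hent
  have hadj : ∀ i j, DifferentiableAt ℝ (fun ε => (M ε).adjugate i j) t := by
    intro i j
    simp only [Matrix.adjugate_apply]
    refine differentiableAt_det fun a b => ?_
    simp only [Matrix.updateRow_apply]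
    by_cases h : a = j <;> simp [h, hent, differentiableAt_const]
  have hinv_ent : ∀ i j, DifferentiableAt ℝ (fun ε => (M ε)⁻¹ i j) t := by
    intro i j
    have he : ∀ ε, (M ε)⁻¹ i j = ((M ε).det)⁻¹ * (M ε).adjugate i j := by
      intro ε
      rw [Matrix.inv_def, Ring.inverse_eq_inv']
      simp [Matrix.smul_apply, smul_eq_mul]
    simp only [he]
    exact (hdetf.inv hdet).mul (hadj i j)
  set N' : Matrix m m ℝ := Matrix.of fun i j => deriv (fun ε => (M ε)⁻¹ i j) t with hN'
  have hNd : MDeriv (fun ε => (M ε)⁻¹) N' t := fun i j => (hinv_ent i j).hasDerivAt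
  have hprod : MDeriv (fun ε => M ε * (M ε)⁻¹) (M' * (M t)⁻¹ + M t * N') t := hM.mul hNd
  have hev : ∀ᶠ ε in nhds t, M ε * (M ε)⁻¹ = 1 := by
    have : ∀ᶠ ε in nhds t, (M ε).det ≠ 0 := hdetf.continuousAt.eventually_ne hdet
    exact this.mono fun ε hε => Matrix.mul_nonsing_inv _ (Ne.isUnit hε)
  have hzero : M' * (M t)⁻¹ + M t * N' = 0 := by
    ext i j
    have h1 : HasDerivAt (fun ε => (M ε * (M ε)⁻¹) i j) ((M' * (M t)⁻¹ + M t * N') i j) t :=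
      hprod i j
    have h2 : HasDerivAt (fun _ : ℝ => (1 : Matrix m m ℝ) i j)
        ((M' * (M t)⁻¹ + M t * N') i j) t := by
      refine h1.congr_of_eventuallyEq ?_
      exact hev.mono fun ε hε => by simp [hε]
    have h3 := (hasDerivAt_const t ((1 : Matrix m m ℝ) i j)).unique h2
    simp [← h3]
  have hiu : IsUnit (M t).det := Ne.isUnit hdet
  have hfin : N' = -((M t)⁻¹ * M' * (M t)⁻¹) := by
    have h4 : M t * N' = -(M' * (M t)⁻¹) := by
      rw [eq_neg_iff_add_eq_zero, add_comm]; exact hzero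
    calc N' = ((M t)⁻¹ * M t) * N' := by rw [Matrix.nonsing_inv_mul _ hiu, Matrix.one_mul]
    _ = (M t)⁻¹ * (M t * N') := by rw [Matrix.mul_assoc]
    _ = (M t)⁻¹ * (-(M' * (M t)⁻¹)) := by rw [h4]
    _ = -((M t)⁻¹ * M' * (M t)⁻¹) := by rw [Matrix.mul_neg, Matrix.mul_assoc]
  rw [← hfin]
  exact hNd

lemma trace_mul_vecMulVec (M : Matrix m n ℝ) (u : n → ℝ) (v : m → ℝ) :
    (M * vecMulVec u v).trace = v ⬝ᵥ (M *ᵥ u) := by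
  simp only [Matrix.trace, Matrix.diag, Matrix.mul_apply, Matrix.vecMulVec_apply, dotProduct,
    Matrix.mulVec, Finset.mul_sum]
  exact Finset.sum_congr rfl fun x _ => Finset.sum_congr rfl fun y _ => by ring

lemma trace_mul_vecMulVec_mul (M : Matrix m n ℝ) (u : n → ℝ) (v : k → ℝ) (N : Matrix k m ℝ) :
    (M * (vecMulVec u v * N)).trace = v ⬝ᵥ ((N * M) *ᵥ u) := by
  calc (M * (vecMulVec u v * N)).trace
      = ((M * vecMulVec u v) * N).trace := by rw [Matrix.mul_assoc]
    _ = (N * (M * vecMulVec u v)).trace := Matrix.trace_mul_comm _ _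
    _ = ((N * M) * vecMulVec u v).trace := by rw [Matrix.mul_assoc]
    _ = v ⬝ᵥ ((N * M) *ᵥ u) := trace_mul_vecMulVec _ _ _

lemma dot_mulVec_symm (u : m → ℝ) (M : Matrix m n ℝ) (v : n → ℝ) :
    u ⬝ᵥ (M *ᵥ v) = v ⬝ᵥ (Mᵀ *ᵥ u) := by
  simp only [dotProduct, Matrix.mulVec, Matrix.transpose_apply, Finset.mul_sum]
  rw [Finset.sum_comm]
  exact Finset.sum_congr rfl fun j _ => Finset.sum_congr rfl fun i _ => by ring

omit [Fintype m] [Fintype n] in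
lemma transpose_vecMulVec (u : m → ℝ) (v : n → ℝ) :
    (vecMulVec u v)ᵀ = vecMulVec v u := by
  ext i j; simp [Matrix.vecMulVec_apply, mul_comm]

lemma posDef_smul {M : Matrix m m ℝ} (hM : M.PosDef) {c : ℝ} (hc : 0 < c) :
    (c • M).PosDef := by
  exact hM.smul hc

lemma posSemidef_smul_vecMulVec {c : ℝ} (hc : 0 ≤ c) (a : m → ℝ) :
    (c • vecMulVec a a).PosSemidef := by
  have h := posSemidef_vecMulVec_self_star a
  rw [star_trivial] at h
  exact h.smul hc

/-! Measure-theoretic helpers -/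

variable {p q : ℕ} {P : Measure ((Fin p → ℝ) × (Fin q → ℝ))} {o : (Fin p → ℝ) × (Fin q → ℝ)}

lemma integrable_dirac' (f : (Fin p → ℝ) × (Fin q → ℝ) → ℝ) :
    Integrable f (Measure.dirac o) :=
  (integrable_const (f o)).congr (MeasureTheory.ae_eq_dirac f).symm

lemma integrable_pert {f : (Fin p → ℝ) × (Fin q → ℝ) → ℝ} (hf : Integrable f P) (ε : ℝ) :
    Integrable f (pert P o ε) :=
  (hf.smul_measure ENNReal.ofReal_ne_top).add_measure
    ((integrable_dirac' f).smul_measure ENNReal.ofReal_ne_top)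

lemma integral_pert {f : (Fin p → ℝ) × (Fin q → ℝ) → ℝ} (hf : Integrable f P) {ε : ℝ}
    (hε : 0 ≤ ε) (hε1 : ε ≤ 1) :
    ∫ z, f z ∂(pert P o ε) = (1 - ε) * ∫ z, f z ∂P + ε * f o := by
  rw [pert, integral_add_measure (hf.smul_measure ENNReal.ofReal_ne_top)
    ((integrable_dirac' f).smul_measure ENNReal.ofReal_ne_top),
    integral_smul_measure, integral_smul_measure, integral_dirac,
    ENNReal.toReal_ofReal (by linarith), ENNReal.toReal_ofReal hε]
  simp [smul_eq_mul]

lemma isProbability_pert [IsProbabilityMeasure P] {ε : ℝ} (hε : 0 ≤ ε) (hε1 : ε ≤ 1) :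
    IsProbabilityMeasure (pert P o ε) := by
  constructor
  rw [pert]
  simp only [Measure.add_apply, Measure.smul_apply, measure_univ, smul_eq_mul, mul_one]
  rw [← ENNReal.ofReal_add (by linarith) hε]
  norm_num

lemma integral_centered_mul {μ : Measure ((Fin p → ℝ) × (Fin q → ℝ))} [IsProbabilityMeasure μ]
    {f g : (Fin p → ℝ) × (Fin q → ℝ) → ℝ}
    (hf : Integrable f μ) (hg : Integrable g μ) (hfg : Integrable (fun z => f z * g z) μ)
    (c d : ℝ) :
    ∫ z, (f z - c) * (g z - d) ∂μ
      = ∫ z, f z * g z ∂μ - c * ∫ z, g z ∂μ - d * ∫ z, f z ∂μ + c * d := by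
  have h1 : ∀ z : (Fin p → ℝ) × (Fin q → ℝ), (f z - c) * (g z - d)
      = f z * g z - c * g z - (d * f z - c * d) := fun z => by ring
  simp only [h1]
  have e1 : ∫ z, (f z * g z - c * g z) - (d * f z - c * d) ∂μ
      = (∫ z, f z * g z - c * g z ∂μ) - ∫ z, d * f z - c * d ∂μ :=
    integral_sub (hfg.sub (hg.const_mul c)) ((hf.const_mul d).sub (integrable_const _))
  have e2 : ∫ z, f z * g z - c * g z ∂μ
      = (∫ z, f z * g z ∂μ) - ∫ z, c * g z ∂μ := integral_sub hfg (hg.const_mul c)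
  have e3 : ∫ z, d * f z - c * d ∂μ
      = (∫ z, d * f z ∂μ) - ∫ z, (c * d : ℝ) ∂μ :=
    integral_sub (hf.const_mul d) (integrable_const _)
  rw [e1, e2, e3, integral_const_mul, integral_const_mul, integral_const]
  simp [measure_univ]
  ring

lemma cov_entry_pert [IsProbabilityMeasure P] {f g : (Fin p → ℝ) × (Fin q → ℝ) → ℝ}
    (hf : Integrable f P) (hg : Integrable g P) (hfg : Integrable (fun z => f z * g z) P)
    {ε : ℝ} (hε : 0 ≤ ε) (hε1 : ε ≤ 1) :
    ∫ z, (f z - ∫ w, f w ∂(pert P o ε)) * (g z - ∫ w, g w ∂(pert P o ε)) ∂(pert P o ε)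
      = (1 - ε) * ∫ z, (f z - ∫ w, f w ∂P) * (g z - ∫ w, g w ∂P) ∂P
        + (ε * (1 - ε)) * ((f o - ∫ w, f w ∂P) * (g o - ∫ w, g w ∂P)) := by
  haveI := isProbability_pert (P := P) (o := o) hε hε1
  rw [integral_centered_mul (integrable_pert hf ε) (integrable_pert hg ε)
      (integrable_pert hfg ε),
    integral_centered_mul hf hg hfg,
    integral_pert hf hε hε1, integral_pert hg hε hε1, integral_pert hfg hε hε1]
  ring

end PillaiVM

open PillaiVM

/-- Von Mises derivative of the Pillai trace `Φ` under Dirac contamination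
`P_ε = (1−ε)P + εδ_o`: for small `ε ≥ 0` the covariance matrices of `P_ε` remain positive
definite and `ε ↦ Φ(P_ε)` has the stated right derivative at `ε = 0` (the canonical gradient
of the Pillai trace evaluated at `o`). -/
theorem pillai_canonical_gradient (p q : ℕ)
    (P : Measure ((Fin p → ℝ) × (Fin q → ℝ))) [IsProbabilityMeasure P]
    (hX2 : Integrable (fun o => ‖o.1‖ ^ 2) P) (hY2 : Integrable (fun o => ‖o.2‖ ^ 2) P)
    (hX : (covX P).PosDef) (hY : (covY P).PosDef)
    (o : (Fin p → ℝ) × (Fin q → ℝ)) :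
    (∃ ε₀ > (0 : ℝ), ∀ ε : ℝ, 0 ≤ ε → ε < ε₀ →
        (covX (pert P o ε)).PosDef ∧ (covY (pert P o ε)).PosDef) ∧
      HasDerivWithinAt (fun ε => pillai (pert P o ε))
        (-((fun i => o.1 i - meanX P i) ⬝ᵥ
              (((covX P)⁻¹ * covXY P * (covY P)⁻¹ * (covXY P)ᵀ * (covX P)⁻¹).mulVec
                (fun i => o.1 i - meanX P i)))
          - ((fun j => o.2 j - meanY P j) ⬝ᵥ
              (((covY P)⁻¹ * (covXY P)ᵀ * (covX P)⁻¹ * covXY P * (covY P)⁻¹).mulVec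
                (fun j => o.2 j - meanY P j)))
          + 2 * ((fun j => o.2 j - meanY P j) ⬝ᵥ
              (((covY P)⁻¹ * (covXY P)ᵀ * (covX P)⁻¹).mulVec
                (fun i => o.1 i - meanX P i))))
        (Set.Ici 0) 0 := by
  classical
  have h1x : ∀ i, Integrable (fun z : (Fin p → ℝ) × (Fin q → ℝ) => z.1 i) P := by
    intro i
    refine Integrable.mono' ((integrable_const (1:ℝ)).add hX2)
      ((measurable_pi_apply i).comp measurable_fst).aestronglyMeasurable
      (ae_of_all _ fun z => ?_)
    have h := norm_le_pi_norm z.1 i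
    have h2 : ‖z.1‖ ≤ 1 + ‖z.1‖ ^ 2 := by nlinarith [sq_nonneg (‖z.1‖ - 1)]
    calc ‖z.1 i‖ ≤ ‖z.1‖ := h
    _ ≤ 1 + ‖z.1‖ ^ 2 := h2
  have h1y : ∀ j, Integrable (fun z : (Fin p → ℝ) × (Fin q → ℝ) => z.2 j) P := by
    intro j
    refine Integrable.mono' ((integrable_const (1:ℝ)).add hY2)
      ((measurable_pi_apply j).comp measurable_snd).aestronglyMeasurable
      (ae_of_all _ fun z => ?_)
    have h := norm_le_pi_norm z.2 j
    have h2 : ‖z.2‖ ≤ 1 + ‖z.2‖ ^ 2 := by nlinarith [sq_nonneg (‖z.2‖ - 1)]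
    calc ‖z.2 j‖ ≤ ‖z.2‖ := h
    _ ≤ 1 + ‖z.2‖ ^ 2 := h2
  have hxx : ∀ i i', Integrable (fun z : (Fin p → ℝ) × (Fin q → ℝ) => z.1 i * z.1 i') P := by
    intro i i'
    refine Integrable.mono' hX2
      ((((measurable_pi_apply i).comp measurable_fst).mul
        ((measurable_pi_apply i').comp measurable_fst)).aestronglyMeasurable)
      (ae_of_all _ fun z => ?_)
    have ha := norm_le_pi_norm z.1 i
    have hb := norm_le_pi_norm z.1 i'
    have : ‖z.1 i * z.1 i'‖ = ‖z.1 i‖ * ‖z.1 i'‖ := norm_mul _ _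
    rw [this]
    calc ‖z.1 i‖ * ‖z.1 i'‖ ≤ ‖z.1‖ * ‖z.1‖ :=
          mul_le_mul ha hb (norm_nonneg _) (norm_nonneg _)
    _ = ‖z.1‖ ^ 2 := (sq ‖z.1‖).symm
  have hyy : ∀ j j', Integrable (fun z : (Fin p → ℝ) × (Fin q → ℝ) => z.2 j * z.2 j') P := by
    intro j j'
    refine Integrable.mono' hY2
      ((((measurable_pi_apply j).comp measurable_snd).mul
        ((measurable_pi_apply j').comp measurable_snd)).aestronglyMeasurable)
      (ae_of_all _ fun z => ?_)
    have ha := norm_le_pi_norm z.2 j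
    have hb := norm_le_pi_norm z.2 j'
    rw [norm_mul]
    calc ‖z.2 j‖ * ‖z.2 j'‖ ≤ ‖z.2‖ * ‖z.2‖ :=
          mul_le_mul ha hb (norm_nonneg _) (norm_nonneg _)
    _ = ‖z.2‖ ^ 2 := (sq ‖z.2‖).symm
  have hxy : ∀ i j, Integrable (fun z : (Fin p → ℝ) × (Fin q → ℝ) => z.1 i * z.2 j) P := by
    intro i j
    refine Integrable.mono' (hX2.add hY2)
      ((((measurable_pi_apply i).comp measurable_fst).mul
        ((measurable_pi_apply j).comp measurable_snd)).aestronglyMeasurable)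
      (ae_of_all _ fun z => ?_)
    have ha := norm_le_pi_norm z.1 i
    have hb := norm_le_pi_norm z.2 j
    simp only [Pi.add_apply]
    rw [norm_mul]
    have := mul_le_mul ha hb (norm_nonneg _) (norm_nonneg _)
    nlinarith [sq_nonneg (‖z.1‖ - ‖z.2‖), norm_nonneg z.1, norm_nonneg z.2]
  -- mean formulas
  set a : Fin p → ℝ := fun i => o.1 i - meanX P i with ha
  set b : Fin q → ℝ := fun j => o.2 j - meanY P j with hb
  have hcovX : ∀ ε : ℝ, 0 ≤ ε → ε ≤ 1 →
      covX (pert P o ε) = (1 - ε) • covX P + (ε * (1 - ε)) • vecMulVec a a := by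
    intro ε hε hε1
    ext i i'
    have hc := cov_entry_pert (P := P) (o := o) (h1x i) (h1x i') (hxx i i') hε hε1
    simp only [covX, meanX, Matrix.of_apply, Matrix.add_apply, Matrix.smul_apply,
      Matrix.vecMulVec_apply, smul_eq_mul, ha]
    exact hc
  have hcovY : ∀ ε : ℝ, 0 ≤ ε → ε ≤ 1 →
      covY (pert P o ε) = (1 - ε) • covY P + (ε * (1 - ε)) • vecMulVec b b := by
    intro ε hε hε1
    ext j j'
    have hc := cov_entry_pert (P := P) (o := o) (h1y j) (h1y j') (hyy j j') hε hε1
    simp only [covY, meanY, Matrix.of_apply, Matrix.add_apply, Matrix.smul_apply,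
      Matrix.vecMulVec_apply, smul_eq_mul, hb]
    exact hc
  have hcovXY : ∀ ε : ℝ, 0 ≤ ε → ε ≤ 1 →
      covXY (pert P o ε) = (1 - ε) • covXY P + (ε * (1 - ε)) • vecMulVec a b := by
    intro ε hε hε1
    ext i j
    have hc := cov_entry_pert (P := P) (o := o) (h1x i) (h1y j) (hxy i j) hε hε1
    simp only [covXY, meanX, meanY, Matrix.of_apply, Matrix.add_apply, Matrix.smul_apply,
      Matrix.vecMulVec_apply, smul_eq_mul, ha, hb]
    exact hc
  have hposX : ∀ ε : ℝ, 0 ≤ ε → ε < 1 → (covX (pert P o ε)).PosDef := by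
    intro ε hε hε1
    rw [hcovX ε hε (le_of_lt hε1)]
    exact (posDef_smul hX (by linarith)).add_posSemidef
      (posSemidef_smul_vecMulVec (mul_nonneg hε (by linarith)) a)
  have hposY : ∀ ε : ℝ, 0 ≤ ε → ε < 1 → (covY (pert P o ε)).PosDef := by
    intro ε hε hε1
    rw [hcovY ε hε (le_of_lt hε1)]
    exact (posDef_smul hY (by linarith)).add_posSemidef
      (posSemidef_smul_vecMulVec (mul_nonneg hε (by linarith)) b)
  refine ⟨⟨1, one_pos, fun ε hε hε1 => ⟨hposX ε hε hε1, hposY ε hε hε1⟩⟩, ?_⟩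
  -- derivative part
  have hdetX : (covX P).det ≠ 0 := hX.det_pos.ne'
  have hdetY : (covY P).det ≠ 0 := hY.det_pos.ne'
  set Af : ℝ → Matrix (Fin p) (Fin p) ℝ :=
    fun ε => (1 - ε) • covX P + (ε * (1 - ε)) • vecMulVec a a with hAf
  set Bf : ℝ → Matrix (Fin p) (Fin q) ℝ :=
    fun ε => (1 - ε) • covXY P + (ε * (1 - ε)) • vecMulVec a b with hBf
  set Cf : ℝ → Matrix (Fin q) (Fin q) ℝ :=
    fun ε => (1 - ε) • covY P + (ε * (1 - ε)) • vecMulVec b b with hCf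
  have hA0 : Af 0 = covX P := by simp [hAf]
  have hB0 : Bf 0 = covXY P := by simp [hBf]
  have hC0 : Cf 0 = covY P := by simp [hCf]
  have hAd : MDeriv Af (-(covX P) + vecMulVec a a) 0 := mderiv_pert_family _ _
  have hBd : MDeriv Bf (-(covXY P) + vecMulVec a b) 0 := mderiv_pert_family _ _
  have hCd : MDeriv Cf (-(covY P) + vecMulVec b b) 0 := mderiv_pert_family _ _
  have hAinv : MDeriv (fun ε => (Af ε)⁻¹)
      (-((covX P)⁻¹ * (-(covX P) + vecMulVec a a) * (covX P)⁻¹)) 0 := by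
    have h := hAd.inv (by rw [hA0]; exact hdetX)
    rwa [hA0] at h
  have hCinv : MDeriv (fun ε => (Cf ε)⁻¹)
      (-((covY P)⁻¹ * (-(covY P) + vecMulVec b b) * (covY P)⁻¹)) 0 := by
    have h := hCd.inv (by rw [hC0]; exact hdetY)
    rwa [hC0] at h
  have hK1 : (covX P)⁻¹ * covX P = 1 := Matrix.nonsing_inv_mul _ (Ne.isUnit hdetX)
  have hK2 : (covY P)⁻¹ * covY P = 1 := Matrix.nonsing_inv_mul _ (Ne.isUnit hdetY)
  have hXsymm : (covX P)ᵀ = covX P := by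
    ext i j
    simp only [Matrix.transpose_apply, covX, Matrix.of_apply]
    rw [show (fun z : (Fin p → ℝ) × (Fin q → ℝ) =>
        (z.1 j - meanX P j) * (z.1 i - meanX P i))
      = fun z => (z.1 i - meanX P i) * (z.1 j - meanX P j) from funext fun z => mul_comm _ _]
  have hYsymm : (covY P)ᵀ = covY P := by
    ext i j
    simp only [Matrix.transpose_apply, covY, Matrix.of_apply]
    rw [show (fun z : (Fin p → ℝ) × (Fin q → ℝ) =>
        (z.2 j - meanY P j) * (z.2 i - meanY P i))
      = fun z => (z.2 i - meanY P i) * (z.2 j - meanY P j) from funext fun z => mul_comm _ _]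
  have hK1T : ((covX P)⁻¹)ᵀ = (covX P)⁻¹ := by rw [Matrix.transpose_nonsing_inv, hXsymm]
  have hK2T : ((covY P)⁻¹)ᵀ = (covY P)⁻¹ := by rw [Matrix.transpose_nonsing_inv, hYsymm]
  have key : HasDerivAt (fun ε => ((Af ε)⁻¹ * Bf ε * (Cf ε)⁻¹ * (Bf ε)ᵀ).trace)
      (-(a ⬝ᵥ (((covX P)⁻¹ * covXY P * (covY P)⁻¹ * (covXY P)ᵀ * (covX P)⁻¹) *ᵥ a))
        - (b ⬝ᵥ (((covY P)⁻¹ * (covXY P)ᵀ * (covX P)⁻¹ * covXY P * (covY P)⁻¹) *ᵥ b))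
        + 2 * (b ⬝ᵥ (((covY P)⁻¹ * (covXY P)ᵀ * (covX P)⁻¹) *ᵥ a))) 0 := by
    have hF := (((hAinv.mul hBd).mul hCinv).mul hBd.transpose).trace
    convert hF using 1
    rw [hA0, hB0, hC0]
    -- simplify the inverse-derivative blocks
    have eNA : -((covX P)⁻¹ * (-(covX P) + vecMulVec a a) * (covX P)⁻¹)
        = (covX P)⁻¹ - (covX P)⁻¹ * vecMulVec a a * (covX P)⁻¹ := by
      rw [mul_add, mul_neg, hK1, add_mul, neg_mul, one_mul, neg_add, neg_neg,
        ← sub_eq_add_neg]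
    have eNC : -((covY P)⁻¹ * (-(covY P) + vecMulVec b b) * (covY P)⁻¹)
        = (covY P)⁻¹ - (covY P)⁻¹ * vecMulVec b b * (covY P)⁻¹ := by
      rw [mul_add, mul_neg, hK2, add_mul, neg_mul, one_mul, neg_add, neg_neg,
        ← sub_eq_add_neg]
    rw [eNA, eNC]
    simp only [Matrix.transpose_add, Matrix.transpose_neg, transpose_vecMulVec,
      Matrix.sub_mul, Matrix.mul_sub, Matrix.add_mul, Matrix.mul_add, Matrix.neg_mul,
      Matrix.mul_neg, Matrix.trace_add, Matrix.trace_sub, Matrix.trace_neg, Matrix.mul_assoc]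
    -- convert the four vecMulVec traces to quadratic forms
    have T2 := trace_mul_vecMulVec_mul ((covX P)⁻¹) a a
      ((covX P)⁻¹ * (covXY P * ((covY P)⁻¹ * (covXY P)ᵀ)))
    have e6 : (covX P)⁻¹ * (covXY P * ((covY P)⁻¹ * (vecMulVec b b *
        ((covY P)⁻¹ * (covXY P)ᵀ))))
        = ((covX P)⁻¹ * (covXY P * (covY P)⁻¹)) * (vecMulVec b b *
          ((covY P)⁻¹ * (covXY P)ᵀ)) := by
      simp only [Matrix.mul_assoc]
    have T6 := trace_mul_vecMulVec_mul ((covX P)⁻¹ * (covXY P * (covY P)⁻¹)) b b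
      ((covY P)⁻¹ * (covXY P)ᵀ)
    have T4 := trace_mul_vecMulVec_mul ((covX P)⁻¹) a b ((covY P)⁻¹ * (covXY P)ᵀ)
    have e8 : (covX P)⁻¹ * (covXY P * ((covY P)⁻¹ * vecMulVec b a))
        = ((covX P)⁻¹ * (covXY P * (covY P)⁻¹)) * vecMulVec b a := by
      simp only [Matrix.mul_assoc]
    have T8 := trace_mul_vecMulVec ((covX P)⁻¹ * (covXY P * (covY P)⁻¹)) b a
    have T8' : a ⬝ᵥ (((covX P)⁻¹ * (covXY P * (covY P)⁻¹)) *ᵥ b)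
        = b ⬝ᵥ (((covY P)⁻¹ * ((covXY P)ᵀ * (covX P)⁻¹)) *ᵥ a) := by
      rw [dot_mulVec_symm]
      congr 1
      simp only [Matrix.transpose_mul, hK1T, hK2T, Matrix.mul_assoc]
    rw [e6, e8, T2, T6, T4, T8, T8']
    simp only [Matrix.mul_assoc]
    ring
  -- put everything together
  have hev : (fun ε => pillai (pert P o ε)) =ᶠ[nhdsWithin 0 (Set.Ici 0)]
      (fun ε => ((Af ε)⁻¹ * Bf ε * (Cf ε)⁻¹ * (Bf ε)ᵀ).trace) := by
    have hmem : Set.Ici (0:ℝ) ∩ Set.Iio 1 ∈ nhdsWithin 0 (Set.Ici 0) :=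
      Filter.inter_mem self_mem_nhdsWithin (mem_nhdsWithin_of_mem_nhds (Iio_mem_nhds one_pos))
    filter_upwards [hmem] with ε hε
    rw [pillai, hcovX ε hε.1 (le_of_lt hε.2), hcovY ε hε.1 (le_of_lt hε.2),
      hcovXY ε hε.1 (le_of_lt hε.2)]
  have h0 : pillai (pert P o 0) = ((Af 0)⁻¹ * Bf 0 * (Cf 0)⁻¹ * (Bf 0)ᵀ).trace := by
    rw [pillai, hcovX 0 le_rfl zero_le_one, hcovY 0 le_rfl zero_le_one,
      hcovXY 0 le_rfl zero_le_one]
  exact (key.hasDerivWithinAt).congr_of_eventuallyEq hev h0
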